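/- Let n, r be positive integers, a_1 ∈ {0,…,n−1}, a_2 ∈ {0,…,r−1}, and w ∈ ℂ. Then H(T_{a_1,a_2}(n,r); w) = (1/(nr)) ∑_{d | n, d ≥ 1} ∑_{e | r, e ≥ 1} c_d(a_1)·c_e(a_2)·(1 − w^d + r·w^d·𝟙{e | d})^{n/d}. -/

import Mathlib

open scoped Classical
open Finset

/-- `e(x) = exp(2πi x)` -/
noncomputable def expu (x : ℝ) : ℂ := Complex.exp (2 * Real.pi * Complex.I * x)

/-- Ramanujan's sum `c_d(a)`. -/
noncomputable def ramanujan (d a : ℕ) : ℂ :=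
  ∑ j ∈ (Finset.Icc 1 d).filter (fun j => Nat.gcd j d = 1), expu (((a : ℝ) * (j : ℝ)) / (d : ℝ))

/-- `γ(x) = ∑_{i=1}^{n-1} i·𝟙{x_i > x_{i+1}}` (1-indexed). -/
noncomputable def gam {n r : ℕ} (x : Fin n → Fin r) : ℕ :=
  ∑ i : Fin n, if h : (i : ℕ) + 1 < n then
      (if (x ⟨(i : ℕ) + 1, h⟩ : ℕ) < (x i : ℕ) then (i : ℕ) + 1 else 0) else 0

/-- `σ(x) = ∑ x_i`. -/
noncomputable def sig {n r : ℕ} (x : Fin n → Fin r) : ℕ := ∑ i : Fin n, (x i : ℕ)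

/-- The Hamming weight of `x`. -/
noncomputable def hwt {n r : ℕ} (x : Fin n → Fin r) : ℕ :=
  (Finset.univ.filter (fun i => (x i : ℕ) ≠ 0)).card




lemma expu_add (x y : ℝ) : expu (x + y) = expu x * expu y := by
  simp [expu, mul_add, Complex.exp_add]

lemma expu_zero : expu 0 = 1 := by simp [expu]

lemma expu_int (k : ℤ) : expu k = 1 := by
  have : (2 * Real.pi * Complex.I * (k:ℝ)) = (k : ℤ) * (2 * Real.pi * Complex.I) := by
    push_cast; ring
  rw [expu, this, Complex.exp_int_mul_two_pi_mul_I]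

lemma expu_nat_mul (m : ℕ) (x : ℝ) : expu (m * x) = expu x ^ m := by
  rw [expu, expu, ← Complex.exp_nat_mul]
  push_cast; ring_nf

lemma expu_sum {ι : Type*} (s : Finset ι) (g : ι → ℝ) :
    expu (∑ i ∈ s, g i) = ∏ i ∈ s, expu (g i) := by
  classical
  induction s using Finset.induction with
  | empty => simp [expu_zero]
  | insert _ _ h ih => rw [Finset.sum_insert h, Finset.prod_insert h, expu_add, ih]

lemma expu_eq_one_iff (x : ℝ) : expu x = 1 ↔ ∃ k : ℤ, x = k := by
  rw [expu, Complex.exp_eq_one_iff]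
  constructor
  · rintro ⟨k, hk⟩
    refine ⟨k, ?_⟩
    have h2 : (2 * (Real.pi:ℂ) * Complex.I) ≠ 0 :=
      mul_ne_zero (mul_ne_zero two_ne_zero (Complex.ofReal_ne_zero.mpr Real.pi_ne_zero))
        Complex.I_ne_zero
    have h3 : (2*(Real.pi:ℂ)*Complex.I) * (x:ℂ) = (2*(Real.pi:ℂ)*Complex.I) * (k:ℂ) := by
      linear_combination hk
    have : (x : ℂ) = (k : ℂ) := mul_left_cancel₀ h2 h3
    exact_mod_cast this
  · rintro ⟨k, rfl⟩
    exact ⟨k, by push_cast; ring⟩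

lemma geom_root (N : ℕ) (hN : 0 < N) (u : ℂ) (h : u ^ N = 1) :
    ∑ m ∈ range N, u ^ m = if u = 1 then (N : ℂ) else 0 := by
  split_ifs with hu
  · simp [hu]
  · have := geom_sum_eq hu N
    rw [this, h]
    simp


lemma expu_div_eq_one_iff (N c : ℕ) (hN : 0 < N) :
    expu ((c : ℝ) / N) = 1 ↔ N ∣ c := by
  rw [expu_eq_one_iff]
  constructor
  · rintro ⟨k, hk⟩
    have hN' : (N:ℝ) ≠ 0 := Nat.cast_ne_zero.mpr hN.ne'
    have : (c : ℝ) = (k * N : ℤ) := by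
      push_cast
      field_simp at hk
      linarith [hk]
    have h2 : (c : ℤ) = k * N := by exact_mod_cast this
    have h3 : (N:ℤ) ∣ (c:ℤ) := ⟨k, by linarith [h2]⟩
    exact_mod_cast h3
  · rintro ⟨k, rfl⟩
    have hN' : (N:ℝ) ≠ 0 := Nat.cast_ne_zero.mpr hN.ne'
    exact ⟨k, by push_cast; field_simp⟩



lemma expu_div_pow_eq_one_iff (N m c : ℕ) (hN : 0 < N) :
    expu ((m : ℝ) / N) ^ c = 1 ↔ N ∣ m * c := by
  rw [← expu_nat_mul]
  have : (c:ℝ) * ((m:ℝ)/N) = ((m*c : ℕ) : ℝ) / N := by push_cast; ring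
  rw [this, expu_div_eq_one_iff _ _ hN]

lemma indicator_mod (N t a : ℕ) (hN : 0 < N) :
    (if t ≡ a [MOD N] then (1:ℂ) else 0)
      = (1/(N:ℂ)) * ∑ m ∈ range N,
          expu (((m*t : ℕ) : ℝ) / N) * expu (-(((m*a : ℕ) : ℝ) / N)) := by
  set u : ℂ := expu (((t:ℝ) - a) / N) with hu
  have hterm : ∀ m ∈ range N,
      expu (((m*t : ℕ) : ℝ) / N) * expu (-(((m*a : ℕ) : ℝ) / N)) = u ^ m := by
    intro m _
    have h1 : ((m*t : ℕ) : ℝ) / N = m * ((t:ℝ)/N) := by push_cast; ring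
    have h2 : -(((m*a : ℕ) : ℝ) / N) = m * (-(a:ℝ)/N) := by push_cast; ring
    rw [h1, h2, expu_nat_mul, expu_nat_mul, ← mul_pow, ← expu_add]
    congr 2
    ring
  rw [Finset.sum_congr rfl hterm]
  have huN : u ^ N = 1 := by
    rw [← expu_nat_mul]
    have hN' : (N:ℝ) ≠ 0 := Nat.cast_ne_zero.mpr hN.ne'
    have : (N:ℝ) * (((t:ℝ) - a) / N) = ((t:ℤ) - a : ℤ) := by push_cast; field_simp
    rw [this, expu_int]
  rw [geom_root N hN u huN]
  have hiff : u = 1 ↔ t ≡ a [MOD N] := by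
    rw [hu, expu_eq_one_iff]
    constructor
    · rintro ⟨k, hk⟩
      have hN' : (N:ℝ) ≠ 0 := Nat.cast_ne_zero.mpr hN.ne'
      have : (t:ℝ) - a = k * N := by field_simp at hk; linarith [hk]
      have h2 : (t:ℤ) - a = k * N := by exact_mod_cast this
      rw [Nat.modEq_iff_dvd]
      exact ⟨-k, by linear_combination -h2⟩
    · intro h
      have := (Nat.modEq_iff_dvd).mp h
      rcases this with ⟨k, hk⟩
      refine ⟨-k, ?_⟩
      have hN' : (N:ℝ) ≠ 0 := Nat.cast_ne_zero.mpr hN.ne'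
      have : ((t:ℤ) - a : ℤ) = (-k) * N := by linear_combination -hk
      have h2 : (t:ℝ) - a = (-k : ℤ) * N := by exact_mod_cast this
      rw [h2]
      push_cast
      field_simp
  by_cases h : t ≡ a [MOD N]
  · rw [if_pos h, if_pos (hiff.mpr h), one_div, inv_mul_cancel₀ (Nat.cast_ne_zero.mpr hN.ne')]
  · rw [if_neg h, if_neg (fun hu1 => h (hiff.mp hu1)), mul_zero]




section Rot
variable {d r : ℕ} [NeZero d]

/-- cyclic descent indicator -/
noncomputable def chi (x : Fin d → Fin r) (i : Fin d) : ℕ :=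
  if (x (i + 1) : ℕ) < (x i : ℕ) then 1 else 0

noncomputable def cdes (x : Fin d → Fin r) : ℕ := ∑ i, chi x i

def rot (x : Fin d → Fin r) : Fin d → Fin r := fun i => x (i + 1)

lemma val_succ (i : Fin d) : ((i + 1 : Fin d) : ℕ) = if (i : ℕ) + 1 < d then (i : ℕ) + 1 else 0 := by
  rcases Nat.lt_or_ge ((i : ℕ) + 1) d with h | h
  · rw [if_pos h, Fin.val_add, Fin.val_one']
    have hd2 : 1 < d := lt_of_le_of_lt (Nat.le_add_left 1 i) h
    rw [Nat.mod_eq_of_lt hd2, Nat.mod_eq_of_lt h]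
  · rw [if_neg (not_lt.mpr h)]
    have he : (i : ℕ) + 1 = d := le_antisymm (Nat.succ_le_of_lt i.isLt) h
    rw [Fin.val_add, Fin.val_one']
    by_cases hd1 : d = 1
    · subst hd1; omega
    · have h1 : 1 % d = 1 := Nat.mod_eq_of_lt (by omega)
      rw [h1, he, Nat.mod_self]

lemma gam_eq_chi (x : Fin d → Fin r) :
    gam x = ∑ i : Fin d, if (i : ℕ) + 1 < d then ((i : ℕ) + 1) * chi x i else 0 := by
  unfold gam
  refine Finset.sum_congr rfl fun i _ => ?_
  by_cases h : (i : ℕ) + 1 < d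
  · rw [dif_pos h, if_pos h]
    have hx : (⟨(i : ℕ) + 1, h⟩ : Fin d) = i + 1 := by
      apply Fin.ext
      rw [val_succ, if_pos h]
    rw [hx, chi]
    split_ifs <;> simp
  · rw [dif_neg h, if_neg h]

/-- the last index -/
noncomputable def lastd : Fin d := ⟨d - 1, Nat.sub_lt (Nat.pos_of_ne_zero (NeZero.ne d)) one_pos⟩

lemma R1 (x : Fin d → Fin r) : gam (rot x) = ∑ j : Fin d, (j : ℕ) * chi x j := by
  rw [gam_eq_chi]
  have hc : ∀ i : Fin d, chi (rot x) i = chi x (i + 1) := fun i => rfl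
  refine Fintype.sum_equiv (Equiv.addRight (1 : Fin d))
    (fun i => if (i : ℕ) + 1 < d then ((i : ℕ) + 1) * chi (rot x) i else 0)
    (fun j => (j : ℕ) * chi x j) (fun i => ?_)
  show (if (i : ℕ) + 1 < d then ((i : ℕ) + 1) * chi (rot x) i else 0)
      = ((i + 1 : Fin d) : ℕ) * chi x (i + 1)
  rw [hc]
  by_cases h : (i : ℕ) + 1 < d
  · rw [if_pos h, val_succ, if_pos h]
  · rw [if_neg h, val_succ, if_neg h, zero_mul]

lemma R2 (x : Fin d → Fin r) :
    gam x + d * chi x lastd = ∑ i : Fin d, ((i : ℕ) + 1) * chi x i := by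
  rw [gam_eq_chi]
  have hL : d * chi x lastd = ∑ i : Fin d, if i = lastd then d * chi x i else 0 := by
    rw [Finset.sum_ite_eq' univ lastd (fun i => d * chi x i)]
    simp
  rw [hL, ← Finset.sum_add_distrib]
  refine Finset.sum_congr rfl fun i _ => ?_
  by_cases h : i = lastd
  · subst h
    have hval : ((lastd : Fin d) : ℕ) = d - 1 := rfl
    have hd : 0 < d := Nat.pos_of_ne_zero (NeZero.ne d)
    rw [if_neg (by rw [hval]; omega), if_pos rfl, zero_add, hval]
    congr 1
    omega
  · have : (i : ℕ) + 1 < d := by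
      have := i.isLt
      have hne : (i : ℕ) ≠ d - 1 := fun hc => h (Fin.ext (by rw [hc]; rfl))
      omega
    rw [if_pos this, if_neg h, add_zero]

lemma rot_identity (x : Fin d → Fin r) :
    gam (rot x) + cdes x = gam x + d * chi x lastd := by
  rw [R1, R2, cdes, ← Finset.sum_add_distrib]
  refine Finset.sum_congr rfl fun i _ => ?_
  ring

lemma cdes_rot (x : Fin d → Fin r) : cdes (rot x) = cdes x := by
  unfold cdes
  refine Fintype.sum_equiv (Equiv.addRight (1 : Fin d)) _ (fun j => chi x j) (fun i => rfl)

end Rot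

section Rot2
variable {d r : ℕ} [NeZero d]

lemma pow_gam_rot (z : ℂ) (hz : z ^ d = 1) (x : Fin d → Fin r) :
    z ^ gam (rot x) * z ^ cdes x = z ^ gam x := by
  rw [← pow_add, rot_identity, pow_add, pow_mul, hz, one_pow, mul_one]

lemma pow_gam_rot_iter (z : ℂ) (hz : z ^ d = 1) :
    ∀ (t : ℕ) (x : Fin d → Fin r), z ^ gam (rot^[t] x) * (z ^ cdes x) ^ t = z ^ gam x := by
  intro t
  induction t with
  | zero => simp
  | succ t ih =>
    intro x
    rw [Function.iterate_succ_apply, pow_succ]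
    have h2 := ih (rot x)
    rw [cdes_rot] at h2
    calc z ^ gam (rot^[t] (rot x)) * ((z ^ cdes x) ^ t * z ^ cdes x)
        = (z ^ gam (rot^[t] (rot x)) * (z ^ cdes x) ^ t) * z ^ cdes x := by ring
      _ = z ^ gam (rot x) * z ^ cdes x := by rw [h2]
      _ = z ^ gam x := pow_gam_rot z hz x

lemma rot_bijective : Function.Bijective (rot : (Fin d → Fin r) → (Fin d → Fin r)) := by
  rw [Function.bijective_iff_has_inverse]
  refine ⟨fun x i => x (i - 1), ?_, ?_⟩
  · intro x; funext i; show x (i - 1 + 1) = x i; rw [sub_add_cancel]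
  · intro x; funext i; show x (i + 1 - 1) = x i; rw [add_sub_cancel_right]

lemma sum_rot (g : (Fin d → Fin r) → ℂ) : (∑ x, g (rot x)) = ∑ x, g x :=
  Fintype.sum_bijective rot rot_bijective (fun x => g (rot x)) g (fun _ => rfl)

lemma sum_rot_iter (t : ℕ) (g : (Fin d → Fin r) → ℂ) :
    (∑ x, g (rot^[t] x)) = ∑ x, g x := by
  induction t generalizing g with
  | zero => simp
  | succ t ih =>
    have : (∑ x, g (rot^[t+1] x)) = ∑ x, (fun y => g (rot^[t] y)) (rot x) := by
      refine Finset.sum_congr rfl fun x _ => ?_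
      rw [Function.iterate_succ_apply]
    rw [this, sum_rot (fun y => g (rot^[t] y)), ih]

lemma prod_rot (f : Fin r → ℂ) (x : Fin d → Fin r) :
    (∏ i, f (rot x i)) = ∏ i, f (x i) :=
  Fintype.prod_equiv (Equiv.addRight (1 : Fin d)) (fun i => f (rot x i)) (fun i => f (x i))
    (fun _ => rfl)

lemma prod_rot_iter (f : Fin r → ℂ) (t : ℕ) (x : Fin d → Fin r) :
    (∏ i, f (rot^[t] x i)) = ∏ i, f (x i) := by
  induction t generalizing x with
  | zero => simp
  | succ t ih =>
    rw [Function.iterate_succ_apply]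
    rw [ih (rot x), prod_rot]

lemma chi_le_one (x : Fin d → Fin r) (i : Fin d) : chi x i ≤ 1 := by
  unfold chi; split_ifs <;> simp

lemma cdes_lt (x : Fin d → Fin r) : cdes x < d := by
  obtain ⟨j, _, hj⟩ := Finset.exists_min_image univ (fun i => (x i : ℕ)) ⟨0, mem_univ 0⟩
  have hchij : chi x j = 0 := by
    unfold chi
    rw [if_neg (not_lt.mpr (hj (j+1) (mem_univ _)))]
  have : cdes x < ∑ _i : Fin d, 1 := by
    refine Finset.sum_lt_sum (fun i _ => chi_le_one x i) ⟨j, mem_univ j, ?_⟩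
    rw [hchij]; omega
  simpa using this

lemma cdes_zero_const {x : Fin d → Fin r} (h : cdes x = 0) (i : Fin d) : x i = x 0 := by
  have hchi : ∀ i : Fin d, chi x i = 0 := by
    intro i
    exact Nat.eq_zero_of_le_zero (h ▸ Finset.single_le_sum (fun i _ => Nat.zero_le _) (mem_univ i))
  have hle : ∀ i : Fin d, (x i : ℕ) ≤ x (i + 1) := by
    intro i
    have := hchi i
    unfold chi at this
    by_contra hc
    rw [if_pos (by omega)] at this
    omega
  have hd : 0 < d := Nat.pos_of_ne_zero (NeZero.ne d)
  have hsucc : ∀ k (hk : k + 1 < d) , (⟨k, by omega⟩ : Fin d) + 1 = ⟨k + 1, hk⟩ := by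
    intro k hk
    apply Fin.ext
    rw [val_succ]
    simp only [if_pos hk]
  have hup : ∀ k (hk : k < d), (x ⟨0, hd⟩ : ℕ) ≤ x ⟨k, hk⟩ := by
    intro k
    induction k with
    | zero => intro _; exact le_refl _
    | succ k ih =>
      intro hk
      have h1 : k < d := by omega
      refine le_trans (ih h1) ?_
      have := hle ⟨k, h1⟩
      rwa [hsucc k hk] at this
  have hdown : ∀ t k (hk : k < d), k + t = d - 1 → (x ⟨k, hk⟩ : ℕ) ≤ x lastd := by
    intro t
    induction t with
    | zero =>
      intro k hk hke
      have : (⟨k, hk⟩ : Fin d) = lastd := Fin.ext (by simp [lastd]; omega)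
      rw [this]
    | succ t ih =>
      intro k hk hke
      have h1 : k + 1 < d := by omega
      refine le_trans ?_ (ih (k+1) h1 (by omega))
      have := hle ⟨k, hk⟩
      rwa [hsucc k h1] at this
  have hwrap : (x lastd : ℕ) ≤ x ⟨0, hd⟩ := by
    have := hle lastd
    have hL : lastd + 1 = (⟨0, hd⟩ : Fin d) := by
      apply Fin.ext
      rw [val_succ]
      show (if (d - 1) + 1 < d then (d-1) + 1 else 0) = 0
      rw [if_neg (by omega)]
    rwa [hL] at this
  have h0 : (0 : Fin d) = ⟨0, hd⟩ := rfl
  apply Fin.ext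
  have l1 : (x ⟨0,hd⟩ : ℕ) ≤ x i := by
    have := hup i.1 i.2
    simpa using this
  have l2 : (x i : ℕ) ≤ x ⟨0, hd⟩ := by
    refine le_trans ?_ hwrap
    have := hdown (d - 1 - i.1) i.1 i.2 (by omega)
    simpa using this
  rw [h0]
  omega

lemma cdes_const (c : Fin r) : cdes (fun _ : Fin d => c) = 0 := by
  unfold cdes chi
  simp

lemma gam_zero_of_cdes_zero {x : Fin d → Fin r} (h : cdes x = 0) : gam x = 0 := by
  have hchi : ∀ i : Fin d, chi x i = 0 := by
    intro i
    exact Nat.eq_zero_of_le_zero (h ▸ Finset.single_le_sum (fun i _ => Nat.zero_le _) (mem_univ i))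
  rw [gam_eq_chi]
  refine Finset.sum_eq_zero fun i _ => ?_
  rw [hchi i]
  simp

end Rot2

lemma base_sum {d r : ℕ} (hd : 0 < d) (z : ℂ) (hz : ∀ c : ℕ, (z ^ c = 1 ↔ d ∣ c))
    (f : Fin r → ℂ) :
    (∑ x : Fin d → Fin r, z ^ gam x * ∏ i, f (x i)) = ∑ c : Fin r, f c ^ d := by
  haveI : NeZero d := ⟨hd.ne'⟩
  have hzd : z ^ d = 1 := (hz d).mpr dvd_rfl
  have hz0 : z ≠ 0 := by
    intro h
    rw [h, zero_pow hd.ne'] at hzd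
    exact zero_ne_one hzd
  have hd0 : (d : ℂ) ≠ 0 := Nat.cast_ne_zero.mpr hd.ne'
  apply mul_left_cancel₀ hd0
  have lhs_eq : (d : ℂ) * (∑ x : Fin d → Fin r, z ^ gam x * ∏ i, f (x i))
      = ∑ t ∈ range d, ∑ x : Fin d → Fin r, z ^ gam x * ∏ i, f (x i) := by
    rw [Finset.sum_const, card_range, nsmul_eq_mul]
  rw [lhs_eq]
  have step1 : ∀ t ∈ range d,
      (∑ x : Fin d → Fin r, z ^ gam x * ∏ i, f (x i))
        = ∑ x : Fin d → Fin r, z ^ gam (rot^[t] x) * ∏ i, f (rot^[t] x i) := by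
    intro t _
    exact (sum_rot_iter t (fun y => z ^ gam y * ∏ i, f (y i))).symm
  rw [Finset.sum_congr rfl step1, Finset.sum_comm]
  have step2 : ∀ x : Fin d → Fin r,
      (∑ t ∈ range d, z ^ gam (rot^[t] x) * ∏ i, f (rot^[t] x i))
        = (if cdes x = 0 then (d : ℂ) else 0) * (z ^ gam x * ∏ i, f (x i)) := by
    intro x
    have hcne : (z ^ cdes x) ≠ 0 := pow_ne_zero _ hz0
    have hgt : ∀ t, z ^ gam (rot^[t] x) = z ^ gam x * ((z ^ cdes x)⁻¹) ^ t := by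
      intro t
      have h := pow_gam_rot_iter z hzd t x
      rw [← h, inv_pow, mul_assoc, mul_inv_cancel₀ (pow_ne_zero t hcne), mul_one]
    have hterm : ∀ t ∈ range d,
        z ^ gam (rot^[t] x) * ∏ i, f (rot^[t] x i)
          = ((z ^ cdes x)⁻¹) ^ t * (z ^ gam x * ∏ i, f (x i)) := by
      intro t _
      rw [prod_rot_iter, hgt]
      ring
    rw [Finset.sum_congr rfl hterm, ← Finset.sum_mul]
    have hgeo : (∑ t ∈ range d, ((z ^ cdes x)⁻¹) ^ t)
        = if (z ^ cdes x)⁻¹ = 1 then (d : ℂ) else 0 := by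
      refine geom_root d hd _ ?_
      rw [inv_pow, ← pow_mul, mul_comm, pow_mul, hzd, one_pow, inv_one]
    rw [hgeo]
    congr 1
    have : ((z ^ cdes x)⁻¹ = 1) ↔ (cdes x = 0) := by
      rw [inv_eq_one, hz]
      constructor
      · intro hdvd
        exact Nat.eq_zero_of_dvd_of_lt hdvd (cdes_lt x)
      · intro h; rw [h]; exact dvd_zero d
    simp [this]
  rw [Finset.sum_congr rfl (fun x _ => step2 x)]
  have step3 : ∀ x : Fin d → Fin r,
      (if cdes x = 0 then (d : ℂ) else 0) * (z ^ gam x * ∏ i, f (x i))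
        = (d : ℂ) * (if cdes x = 0 then f (x 0) ^ d else 0) := by
    intro x
    by_cases h : cdes x = 0
    · rw [if_pos h, if_pos h, gam_zero_of_cdes_zero h, pow_zero, one_mul]
      congr 1
      have : ∀ i, f (x i) = f (x 0) := fun i => by rw [cdes_zero_const h i]
      rw [Finset.prod_congr rfl (fun i _ => this i), Finset.prod_const, card_univ,
        Fintype.card_fin]
    · rw [if_neg h, if_neg h, zero_mul, mul_zero]
  rw [Finset.sum_congr rfl (fun x _ => step3 x), ← Finset.mul_sum]
  congr 1
  rw [← Finset.sum_filter]
  refine Finset.sum_nbij' (fun x => x 0) (fun c => fun _ => c) ?_ ?_ ?_ ?_ ?_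
  · intro x _; exact mem_univ _
  · intro c _
    simp only [mem_filter, mem_univ, true_and]
    exact cdes_const c
  · intro x hx
    simp only [mem_filter, mem_univ, true_and] at hx
    funext i
    exact (cdes_zero_const hx i).symm
  · intro c _; rfl
  · intro x _; rfl

noncomputable def extf {n r : ℕ} (x : Fin n → Fin r) : ℕ → ℕ :=
  fun i => if h : i < n then (x ⟨i, h⟩ : ℕ) else 0

noncomputable def dsc (n : ℕ) (y : ℕ → ℕ) (i : ℕ) : ℕ :=
  if i + 1 < n ∧ y (i + 1) < y i then i + 1 else 0

lemma gam_eq_range {n r : ℕ} (x : Fin n → Fin r) :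
    gam x = ∑ i ∈ range n, dsc n (extf x) i := by
  rw [← Fin.sum_univ_eq_sum_range]
  unfold gam
  refine Finset.sum_congr rfl fun i _ => ?_
  unfold dsc extf
  by_cases h : (i : ℕ) + 1 < n
  · rw [dif_pos h]
    have h1 : (i : ℕ) < n := i.isLt
    rw [dif_pos h, dif_pos h1]
    have : (⟨(i : ℕ), h1⟩ : Fin n) = i := rfl
    rw [this]
    by_cases h2 : (x ⟨(i : ℕ) + 1, h⟩ : ℕ) < (x i : ℕ)
    · rw [if_pos h2, if_pos ⟨h, h2⟩]
    · rw [if_neg h2, if_neg (by tauto)]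
  · rw [dif_neg h, if_neg (by tauto)]

lemma pow_gam_eq_prod {n r : ℕ} (z : ℂ) (x : Fin n → Fin r) :
    z ^ gam x = ∏ i ∈ range n, z ^ dsc n (extf x) i := by
  rw [gam_eq_range, Finset.prod_pow_eq_pow_sum]

lemma ext_append_left {m d r : ℕ} (u : Fin m → Fin r) (v : Fin d → Fin r)
    (i : ℕ) (hi : i < m) : extf (Fin.append u v) i = extf u i := by
  unfold extf
  rw [dif_pos hi, dif_pos (by omega : i < m + d)]
  have : (⟨i, by omega⟩ : Fin (m + d)) = Fin.castAdd d ⟨i, hi⟩ := rfl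
  rw [this, Fin.append_left]

lemma ext_append_right {m d r : ℕ} (u : Fin m → Fin r) (v : Fin d → Fin r)
    (j : ℕ) (hj : j < d) : extf (Fin.append u v) (m + j) = extf v j := by
  unfold extf
  rw [dif_pos hj, dif_pos (by omega : m + j < m + d)]
  have : (⟨m + j, by omega⟩ : Fin (m + d)) = Fin.natAdd m ⟨j, hj⟩ := rfl
  rw [this, Fin.append_right]

lemma pow_gam_append {m d r : ℕ} (hd : 0 < d) (hm : d ∣ m) (z : ℂ) (hzd : z ^ d = 1)
    (u : Fin m → Fin r) (v : Fin d → Fin r) :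
    z ^ gam (Fin.append u v) = z ^ gam u * z ^ gam v := by
  have hzm : z ^ m = 1 := by
    obtain ⟨c, rfl⟩ := hm
    rw [pow_mul, hzd, one_pow]
  rw [pow_gam_eq_prod, pow_gam_eq_prod z u, pow_gam_eq_prod z v, Finset.prod_range_add]
  congr 1
  · refine Finset.prod_congr rfl fun i hi => ?_
    rw [mem_range] at hi
    unfold dsc
    by_cases h : i + 1 < m
    · rw [ext_append_left u v _ (by omega), ext_append_left u v _ (by omega)]
      by_cases h2 : extf u (i+1) < extf u i
      · rw [if_pos ⟨by omega, h2⟩, if_pos ⟨h, h2⟩]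
      · rw [if_neg (by tauto), if_neg (by tauto)]
    · -- i + 1 = m : boundary
      have him : i + 1 = m := by omega
      have hru : (if i + 1 < m ∧ extf u (i+1) < extf u i then i + 1 else 0) = 0 :=
        if_neg (by tauto)
      rw [hru, pow_zero]
      by_cases h2 : i + 1 < m + d ∧ extf (Fin.append u v) (i+1) < extf (Fin.append u v) i
      · rw [if_pos h2, him, hzm]
      · rw [if_neg h2, pow_zero]
  · refine Finset.prod_congr rfl fun j hj => ?_
    rw [mem_range] at hj
    unfold dsc
    by_cases h : j + 1 < d
    · have e1 : m + j + 1 = m + (j + 1) := by omega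
      rw [e1, ext_append_right u v _ (by omega), ext_append_right u v _ hj]
      by_cases h2 : extf v (j+1) < extf v j
      · rw [if_pos ⟨by omega, h2⟩, if_pos ⟨h, h2⟩, pow_add, hzm, one_mul]
      · rw [if_neg (by tauto), if_neg (by tauto)]
    · rw [if_neg (by omega), if_neg (by tauto)]

noncomputable def appendEquiv (m d r : ℕ) :
    ((Fin m → Fin r) × (Fin d → Fin r)) ≃ (Fin (m + d) → Fin r) :=
  (Equiv.sumArrowEquivProdArrow (Fin m) (Fin d) (Fin r)).symm.trans
    (Equiv.arrowCongr finSumFinEquiv (Equiv.refl (Fin r)))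

lemma appendEquiv_apply {m d r : ℕ} (u : Fin m → Fin r) (v : Fin d → Fin r) :
    appendEquiv m d r (u, v) = Fin.append u v := by
  funext j
  obtain ⟨s, rfl⟩ := finSumFinEquiv.surjective j
  cases s with
  | inl i =>
    simp [appendEquiv, Equiv.sumArrowEquivProdArrow, finSumFinEquiv_apply_left, Fin.append_left]
  | inr i =>
    simp [appendEquiv, Equiv.sumArrowEquivProdArrow, finSumFinEquiv_apply_right, Fin.append_right]

lemma split_sum {d r : ℕ} (hd : 0 < d) (z : ℂ) (hzd : z ^ d = 1) (f : Fin r → ℂ) :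
    ∀ k : ℕ, (∑ x : Fin (d * k) → Fin r, z ^ gam x * ∏ i, f (x i))
      = (∑ x : Fin d → Fin r, z ^ gam x * ∏ i, f (x i)) ^ k := by
  intro k
  induction k with
  | zero =>
    have h1 : (∑ x : Fin (d * 0) → Fin r, z ^ gam x * ∏ i, f (x i))
        = ∑ _x : Fin (d * 0) → Fin r, (1 : ℂ) :=
      Finset.sum_congr rfl (fun x _ => by simp [gam])
    rw [pow_zero, h1, Finset.sum_const, card_univ]
    simp
  | succ k ih =>
    have key : (∑ x : Fin (d * k + d) → Fin r, z ^ gam x * ∏ i, f (x i))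
        = (∑ x : Fin (d * k) → Fin r, z ^ gam x * ∏ i, f (x i))
          * (∑ x : Fin d → Fin r, z ^ gam x * ∏ i, f (x i)) := by
      rw [← Fintype.sum_equiv (appendEquiv (d*k) d r)
        (fun p => z ^ gam (appendEquiv (d*k) d r p) * ∏ i, f ((appendEquiv (d*k) d r p) i))
        (fun x => z ^ gam x * ∏ i, f (x i)) (fun p => rfl)]
      rw [Fintype.sum_prod_type]
      have hterm : ∀ (u : Fin (d*k) → Fin r) (v : Fin d → Fin r),
          z ^ gam (appendEquiv (d*k) d r (u, v)) * ∏ i, f ((appendEquiv (d*k) d r (u, v)) i)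
            = (z ^ gam u * ∏ i, f (u i)) * (z ^ gam v * ∏ i, f (v i)) := by
        intro u v
        rw [appendEquiv_apply, pow_gam_append hd ⟨k, rfl⟩ z hzd u v]
        rw [Fin.prod_univ_add (fun i => f (Fin.append u v i))]
        have hl : ∀ i : Fin (d*k), Fin.append u v (Fin.castAdd d i) = u i := fun i =>
          Fin.append_left u v i
        have hr : ∀ i : Fin d, Fin.append u v (Fin.natAdd (d*k) i) = v i := fun i =>
          Fin.append_right u v i
        rw [Finset.prod_congr rfl (fun i _ => congrArg f (hl i)),
            Finset.prod_congr rfl (fun i _ => congrArg f (hr i))]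
        ring
      rw [Finset.sum_congr rfl fun u _ => Finset.sum_congr rfl fun v _ => hterm u v]
      exact (Finset.sum_mul_sum _ _ _ _).symm
    rw [show d * (k+1) = d * k + d from rfl] at *
    rw [key, ih, pow_succ]



lemma expu_neg (t : ℝ) : expu (-t) = (expu t)⁻¹ := by
  have h : expu (-t) * expu t = 1 := by rw [← expu_add, neg_add_cancel, expu_zero]
  exact eq_inv_of_mul_eq_one_left h

lemma nat_dvd_iff (n m c : ℕ) (hn : 0 < n) : n ∣ m * c ↔ (n / Nat.gcd m n) ∣ c := by
  set g := Nat.gcd m n with hg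
  have hgpos : 0 < g := Nat.gcd_pos_of_pos_right m hn
  have hgn : g ∣ n := Nat.gcd_dvd_right m n
  have hgm : g ∣ m := Nat.gcd_dvd_left m n
  have h1 : n = g * (n / g) := (Nat.mul_div_cancel' hgn).symm
  have h2 : m * c = g * ((m / g) * c) := by
    rw [← mul_assoc, Nat.mul_div_cancel' hgm]
  constructor
  · intro h
    rw [h1, h2, Nat.mul_dvd_mul_iff_left hgpos] at h
    have hcop : Nat.Coprime (n / g) (m / g) := (Nat.coprime_div_gcd_div_gcd hgpos).symm
    exact hcop.dvd_of_dvd_mul_left h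
  · intro h
    calc n = g * (n / g) := h1
    _ ∣ g * ((m/g) * c) := Nat.mul_dvd_mul_left g (Dvd.dvd.mul_left h (m/g))
    _ = m * c := h2.symm

lemma order_expu (n m : ℕ) (hn : 0 < n) (c : ℕ) :
    expu ((m : ℝ) / n) ^ c = 1 ↔ (n / Nat.gcd m n) ∣ c := by
  rw [expu_div_pow_eq_one_iff n m c hn, nat_dvd_iff n m c hn]

lemma gcd_helper (n d j : ℕ) (hd : d ∣ n) (hn : 0 < n) (hj : Nat.gcd j d = 1) :
    Nat.gcd (n / d * j) n = n / d := by
  have h1 : n / d * d = n := Nat.div_mul_cancel hd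
  calc Nat.gcd (n / d * j) n = Nat.gcd ((n/d) * j) ((n/d) * d) := by rw [h1]
    _ = (n/d) * Nat.gcd j d := Nat.gcd_mul_left _ _ _
    _ = n / d := by rw [hj, mul_one]

lemma sum_range_divisors (n : ℕ) (hn : 0 < n) (h : ℕ → ℂ) :
    ∑ m ∈ range n, h m
      = ∑ d ∈ n.divisors, ∑ j ∈ (range d).filter (fun j => Nat.gcd j d = 1), h ((n / d) * j) := by
  have main : ∑ p ∈ (n.divisors.sigma fun d => (range d).filter (fun j => Nat.gcd j d = 1)),
      h (n / p.1 * p.2) = ∑ m ∈ range n, h m := by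
    refine Finset.sum_nbij' (i := fun p => n / p.1 * p.2)
      (j := fun m => ⟨n / Nat.gcd m n, m / Nat.gcd m n⟩) ?_ ?_ ?_ ?_ ?_
    · rintro ⟨d, j⟩ hp
      rw [Finset.mem_sigma, Nat.mem_divisors, Finset.mem_filter, Finset.mem_range] at hp
      obtain ⟨⟨hdn, -⟩, hjd, -⟩ := hp
      rw [Finset.mem_range]
      calc n / d * j < n / d * d := by
            exact mul_lt_mul_of_pos_left hjd (Nat.div_pos (Nat.le_of_dvd hn hdn)
              (Nat.pos_of_dvd_of_pos hdn hn))
        _ = n := Nat.div_mul_cancel hdn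
    · intro m hm
      rw [Finset.mem_range] at hm
      have hg : 0 < Nat.gcd m n := Nat.gcd_pos_of_pos_right m hn
      rw [Finset.mem_sigma, Nat.mem_divisors, Finset.mem_filter, Finset.mem_range]
      refine ⟨⟨Nat.div_dvd_of_dvd (Nat.gcd_dvd_right m n), hn.ne'⟩, ?_, ?_⟩
      · exact Nat.div_lt_div_of_lt_of_dvd (Nat.gcd_dvd_right m n) hm
      · exact Nat.coprime_div_gcd_div_gcd hg
    · rintro ⟨d, j⟩ hp
      rw [Finset.mem_sigma, Nat.mem_divisors, Finset.mem_filter, Finset.mem_range] at hp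
      obtain ⟨⟨hdn, -⟩, hjd, hcop⟩ := hp
      have h1 : Nat.gcd (n / d * j) n = n / d := gcd_helper n d j hdn hn hcop
      have h2 : n / (n / d) = d := Nat.div_div_self hdn hn.ne'
      have hdpos : 0 < n / d := Nat.div_pos (Nat.le_of_dvd hn hdn) (Nat.pos_of_dvd_of_pos hdn hn)
      have h3 : n / d * j / (n / d) = j := Nat.mul_div_cancel_left j hdpos
      simp only [h1, h2, h3]
    · intro m hm
      rw [Finset.mem_range] at hm
      show n / (n / Nat.gcd m n) * (m / Nat.gcd m n) = m
      have hg : 0 < Nat.gcd m n := Nat.gcd_pos_of_pos_right m hn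
      rw [Nat.div_div_self (Nat.gcd_dvd_right m n) hn.ne',
        Nat.mul_div_cancel' (Nat.gcd_dvd_left m n)]
    · intro p _; rfl
  rw [← main]
  exact Finset.sum_sigma n.divisors _ (fun p : Σ _ : ℕ, ℕ => h (n / p.1 * p.2))

lemma gcd_sub (d j : ℕ) (hj : j ≤ d) : Nat.gcd (d - j) d = Nat.gcd j d := by
  calc Nat.gcd (d - j) d = Nat.gcd (d - j) (j + (d - j)) := by
        rw [show j + (d - j) = d from by omega]
    _ = Nat.gcd (d - j) j := Nat.gcd_add_self_right _ _
    _ = Nat.gcd d j := Nat.gcd_sub_self_left hj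
    _ = Nat.gcd j d := Nat.gcd_comm _ _

lemma ram_eq (d a : ℕ) (hd : 0 < d) :
    ∑ j ∈ (range d).filter (fun j => Nat.gcd j d = 1), expu (-(((j * a : ℕ) : ℝ) / d))
      = ramanujan d a := by
  unfold ramanujan
  refine Finset.sum_nbij' (i := fun j => d - j) (j := fun j => d - j) ?_ ?_ ?_ ?_ ?_
  · intro j hjm
    rw [Finset.mem_filter, Finset.mem_range] at hjm
    obtain ⟨hjd, hcop⟩ := hjm
    rw [Finset.mem_filter, Finset.mem_Icc]
    beta_reduce
    exact ⟨⟨by omega, by omega⟩, by rw [gcd_sub d j (by omega)]; exact hcop⟩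
  · intro j hjm
    rw [Finset.mem_filter, Finset.mem_Icc] at hjm
    obtain ⟨⟨h1, h2⟩, hcop⟩ := hjm
    rw [Finset.mem_filter, Finset.mem_range]
    beta_reduce
    exact ⟨by omega, by rw [gcd_sub d j h2]; exact hcop⟩
  · intro j hjm
    rw [Finset.mem_filter, Finset.mem_range] at hjm
    beta_reduce
    omega
  · intro j hjm
    rw [Finset.mem_filter, Finset.mem_Icc] at hjm
    beta_reduce
    omega
  · intro j hjm
    rw [Finset.mem_filter, Finset.mem_range] at hjm
    obtain ⟨hjd, -⟩ := hjm
    have hd0 : (d : ℝ) ≠ 0 := Nat.cast_ne_zero.mpr hd.ne'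
    have hmul : expu ((a : ℝ) * ((d - j : ℕ) : ℝ) / d) * expu (((j * a : ℕ) : ℝ) / d) = 1 := by
      rw [← expu_add]
      have harg : (a : ℝ) * ((d - j : ℕ) : ℝ) / d + ((j * a : ℕ) : ℝ) / d = ((a : ℤ) : ℝ) := by
        push_cast [Nat.cast_sub (le_of_lt hjd)]
        field_simp
        ring
      rw [harg, expu_int]
    rw [expu_neg]
    exact (eq_inv_of_mul_eq_one_left hmul).symm

lemma real_arg (n d j a : ℕ) (hdn : d ∣ n) (hn : 0 < n) :
    ((((n / d) * j) * a : ℕ) : ℝ) / n = ((j * a : ℕ) : ℝ) / d := by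
  have hd : 0 < d := Nat.pos_of_dvd_of_pos hdn hn
  have hnd : 0 < n / d := Nat.div_pos (Nat.le_of_dvd hn hdn) hd
  have h1 : (n / d) * d = n := Nat.div_mul_cancel hdn
  have h1' : ((n / d : ℕ) : ℝ) * (d : ℝ) = (n : ℝ) := by exact_mod_cast congrArg Nat.cast h1
  push_cast
  rw [div_eq_div_iff (by exact_mod_cast hn.ne' : (n:ℝ) ≠ 0) (by exact_mod_cast hd.ne' : (d:ℝ) ≠ 0)]
  rw [← h1']
  ring

lemma pow_hwt {n r : ℕ} (w : ℂ) (x : Fin n → Fin r) :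
    w ^ hwt x = ∏ i, (if (x i : ℕ) ≠ 0 then w else 1) := by
  rw [hwt, Finset.prod_ite, Finset.prod_const, Finset.prod_const_one, mul_one]

lemma sigma_sum {n r : ℕ} {d : ℕ} (hdn : d ∣ n) (hn : 0 < n) (z : ℂ)
    (hz : ∀ c : ℕ, z ^ c = 1 ↔ d ∣ c) (f : Fin r → ℂ) :
    (∑ x : Fin n → Fin r, z ^ gam x * ∏ i, f (x i)) = (∑ c : Fin r, f c ^ d) ^ (n / d) := by
  have hd : 0 < d := Nat.pos_of_dvd_of_pos hdn hn
  obtain ⟨k, hk⟩ := hdn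
  subst hk
  rw [Nat.mul_div_cancel_left k hd]
  rw [split_sum hd z ((hz d).mpr dvd_rfl) f k, base_sum hd z hz f]

lemma inner_sum_T (n r : ℕ) (hn : 0 < n) (hr : 0 < r) (m s : ℕ) (w : ℂ) :
    (∑ x : Fin n → Fin r,
        expu (((m * gam x : ℕ) : ℝ) / n) * (expu (((s * sig x : ℕ) : ℝ) / r) * w ^ hwt x))
      = (1 - w ^ (n / Nat.gcd m n) + (r : ℂ) * w ^ (n / Nat.gcd m n) *
          (if (r / Nat.gcd s r) ∣ (n / Nat.gcd m n) then 1 else 0)) ^ (n / (n / Nat.gcd m n)) := by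
  set D := n / Nat.gcd m n with hD
  set E := r / Nat.gcd s r with hE
  set z : ℂ := expu ((m : ℝ) / n) with hzdef
  set f : Fin r → ℂ :=
    fun c => expu (((s * (c : ℕ) : ℕ) : ℝ) / r) * (if (c : ℕ) ≠ 0 then w else 1) with hfdef
  have hterm : ∀ x : Fin n → Fin r,
      expu (((m * gam x : ℕ) : ℝ) / n) * (expu (((s * sig x : ℕ) : ℝ) / r) * w ^ hwt x)
        = z ^ gam x * ∏ i, f (x i) := by
    intro x
    have h1 : expu (((m * gam x : ℕ) : ℝ) / n) = z ^ gam x := by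
      rw [hzdef, ← expu_nat_mul]
      congr 1
      push_cast
      ring
    have h2 : expu (((s * sig x : ℕ) : ℝ) / r)
        = ∏ i, expu (((s * (x i : ℕ) : ℕ) : ℝ) / r) := by
      rw [← expu_sum]
      congr 1
      rw [sig]
      push_cast
      rw [Finset.mul_sum, Finset.sum_div]
    have h3 : w ^ hwt x = ∏ i, (if (x i : ℕ) ≠ 0 then w else 1) := pow_hwt w x
    rw [h1, h2, h3, ← Finset.prod_mul_distrib]
  rw [Finset.sum_congr rfl (fun x _ => hterm x)]
  have hz : ∀ c : ℕ, z ^ c = 1 ↔ D ∣ c := order_expu n m hn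
  have hDn : D ∣ n := Nat.div_dvd_of_dvd (Nat.gcd_dvd_right m n)
  rw [sigma_sum hDn hn z hz f]
  congr 1
  have hfc : ∀ c : Fin r, f c ^ D
      = expu ((((s * D) * (c : ℕ) : ℕ) : ℝ) / r) * w ^ D
        + (if (c : ℕ) = 0 then 1 - w ^ D else 0) := by
    intro c
    have hpow : expu (((s * (c : ℕ) : ℕ) : ℝ) / r) ^ D
        = expu ((((s * D) * (c : ℕ) : ℕ) : ℝ) / r) := by
      rw [← expu_nat_mul]
      congr 1
      push_cast
      ring
    by_cases hc : (c : ℕ) = 0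
    · rw [hfdef]
      beta_reduce
      rw [hc, if_neg (by simp), if_pos rfl]
      simp only [Nat.mul_zero, Nat.cast_zero, zero_div, expu_zero, one_mul, one_pow]
      ring
    · rw [hfdef]
      beta_reduce
      rw [if_pos hc, if_neg hc, add_zero, mul_pow, hpow]
  rw [Finset.sum_congr rfl (fun c _ => hfc c), Finset.sum_add_distrib]
  have h0 : (∑ c : Fin r, if (c : ℕ) = 0 then 1 - w ^ D else 0) = 1 - w ^ D := by
    haveI : NeZero r := ⟨hr.ne'⟩
    have hc0 : ∀ c : Fin r, (if (c : ℕ) = 0 then 1 - w ^ D else 0)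
        = if c = (0 : Fin r) then 1 - w ^ D else 0 := by
      intro c
      have hv0 : ((0 : Fin r) : ℕ) = 0 := Fin.val_zero r
      by_cases h : c = (0 : Fin r)
      · subst h
        rw [if_pos hv0, if_pos rfl]
      · rw [if_neg h, if_neg (fun hc => h (Fin.ext (by rw [hc, hv0])))]
    rw [Finset.sum_congr rfl (fun c _ => hc0 c), Finset.sum_ite_eq' univ (0 : Fin r)]
    simp
  have h1 : (∑ c : Fin r, expu ((((s * D) * (c : ℕ) : ℕ) : ℝ) / r) * w ^ D)
      = (if E ∣ D then (r : ℂ) else 0) * w ^ D := by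
    rw [← Finset.sum_mul]
    congr 1
    have hu : ∀ c : Fin r, expu ((((s * D) * (c : ℕ) : ℕ) : ℝ) / r)
        = expu (((s * D : ℕ) : ℝ) / r) ^ (c : ℕ) := by
      intro c
      rw [← expu_nat_mul]
      congr 1
      push_cast
      ring
    rw [Finset.sum_congr rfl (fun c _ => hu c),
      Fin.sum_univ_eq_sum_range (fun c => expu (((s * D : ℕ) : ℝ) / r) ^ c) r]
    have hur : expu (((s * D : ℕ) : ℝ) / r) ^ r = 1 := by
      rw [← expu_nat_mul]
      have harg : (r : ℝ) * (((s * D : ℕ) : ℝ) / r) = ((s * D : ℕ) : ℤ) := by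
        push_cast
        field_simp
      rw [harg, expu_int]
    rw [geom_root r hr _ hur]
    have hiff : (expu (((s * D : ℕ) : ℝ) / r) = 1) ↔ (E ∣ D) := by
      rw [expu_div_eq_one_iff _ _ hr, nat_dvd_iff r s D hr]
    simp only [hiff]
  rw [h0, h1]
  split_ifs <;> ring

theorem stmt_4 (n r : ℕ) (hn : 0 < n) (hr : 0 < r)
    (a₁ a₂ : ℕ) (ha₁ : a₁ < n) (ha₂ : a₂ < r) (w : ℂ) :
    ∑ x ∈ Finset.univ.filter
        (fun x : Fin n → Fin r => gam x ≡ a₁ [MOD n] ∧ sig x ≡ a₂ [MOD r]),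
      w ^ hwt x
    = (1 / ((n : ℂ) * (r : ℂ))) *
        ∑ d ∈ n.divisors, ∑ e ∈ r.divisors,
          ramanujan d a₁ * ramanujan e a₂ *
            (1 - w ^ d + (r : ℂ) * w ^ d * (if e ∣ d then 1 else 0)) ^ (n / d) := by
  classical
  -- notation
  set G : ℕ → ℕ → ℂ := fun d e =>
    (1 - w ^ d + (r : ℂ) * w ^ d * (if e ∣ d then 1 else 0)) ^ (n / d) with hGdef
  -- Step 1: indicators
  rw [Finset.sum_filter]
  have hx : ∀ x : Fin n → Fin r,
      (if gam x ≡ a₁ [MOD n] ∧ sig x ≡ a₂ [MOD r] then w ^ hwt x else 0)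
        = (1/((n:ℂ)*(r:ℂ))) *
          ((∑ m ∈ range n, expu (((m * gam x : ℕ) : ℝ) / n) * expu (-(((m * a₁ : ℕ) : ℝ) / n))) *
           ((∑ s ∈ range r, expu (((s * sig x : ℕ) : ℝ) / r) * expu (-(((s * a₂ : ℕ) : ℝ) / r)))
              * w ^ hwt x)) := by
    intro x
    have hsplit : (if gam x ≡ a₁ [MOD n] ∧ sig x ≡ a₂ [MOD r] then w ^ hwt x else 0)
        = (if gam x ≡ a₁ [MOD n] then (1:ℂ) else 0)
          * ((if sig x ≡ a₂ [MOD r] then (1:ℂ) else 0) * w ^ hwt x) := by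
      split_ifs <;> simp_all
    rw [hsplit, indicator_mod n (gam x) a₁ hn, indicator_mod r (sig x) a₂ hr]
    ring
  rw [Finset.sum_congr rfl (fun x _ => hx x), ← Finset.mul_sum]
  congr 1
  -- Step 2: expand products of sums, swap summation order
  have hexp : ∀ x : Fin n → Fin r,
      ((∑ m ∈ range n, expu (((m * gam x : ℕ) : ℝ) / n) * expu (-(((m * a₁ : ℕ) : ℝ) / n))) *
           ((∑ s ∈ range r, expu (((s * sig x : ℕ) : ℝ) / r) * expu (-(((s * a₂ : ℕ) : ℝ) / r)))
              * w ^ hwt x))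
        = ∑ m ∈ range n, ∑ s ∈ range r,
            (expu (((m * gam x : ℕ) : ℝ) / n) * expu (-(((m * a₁ : ℕ) : ℝ) / n))) *
            ((expu (((s * sig x : ℕ) : ℝ) / r) * expu (-(((s * a₂ : ℕ) : ℝ) / r))) * w ^ hwt x) := by
    intro x
    rw [Finset.sum_mul]
    refine Finset.sum_congr rfl fun m _ => ?_
    rw [Finset.sum_mul, Finset.mul_sum]
  rw [Finset.sum_congr rfl (fun x _ => hexp x), Finset.sum_comm]
  have hswap2 : ∀ m ∈ range n,
      (∑ x : Fin n → Fin r, ∑ s ∈ range r,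
            (expu (((m * gam x : ℕ) : ℝ) / n) * expu (-(((m * a₁ : ℕ) : ℝ) / n))) *
            ((expu (((s * sig x : ℕ) : ℝ) / r) * expu (-(((s * a₂ : ℕ) : ℝ) / r))) * w ^ hwt x))
        = ∑ s ∈ range r, ∑ x : Fin n → Fin r,
            (expu (((m * gam x : ℕ) : ℝ) / n) * expu (-(((m * a₁ : ℕ) : ℝ) / n))) *
            ((expu (((s * sig x : ℕ) : ℝ) / r) * expu (-(((s * a₂ : ℕ) : ℝ) / r))) * w ^ hwt x) :=
    fun m _ => Finset.sum_comm
  rw [Finset.sum_congr rfl hswap2]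
  -- Step 3: inner sum over x
  have hms : ∀ m s : ℕ,
      (∑ x : Fin n → Fin r,
            (expu (((m * gam x : ℕ) : ℝ) / n) * expu (-(((m * a₁ : ℕ) : ℝ) / n))) *
            ((expu (((s * sig x : ℕ) : ℝ) / r) * expu (-(((s * a₂ : ℕ) : ℝ) / r))) * w ^ hwt x))
        = expu (-(((m * a₁ : ℕ) : ℝ) / n)) * (expu (-(((s * a₂ : ℕ) : ℝ) / r)) *
            ((1 - w ^ (n / Nat.gcd m n) + (r : ℂ) * w ^ (n / Nat.gcd m n) *
              (if (r / Nat.gcd s r) ∣ (n / Nat.gcd m n) then 1 else 0)) ^ (n / (n / Nat.gcd m n)))) := by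
    intro m s
    have h1 : ∀ x : Fin n → Fin r,
        (expu (((m * gam x : ℕ) : ℝ) / n) * expu (-(((m * a₁ : ℕ) : ℝ) / n))) *
            ((expu (((s * sig x : ℕ) : ℝ) / r) * expu (-(((s * a₂ : ℕ) : ℝ) / r))) * w ^ hwt x)
          = (expu (-(((m * a₁ : ℕ) : ℝ) / n)) * expu (-(((s * a₂ : ℕ) : ℝ) / r))) *
            (expu (((m * gam x : ℕ) : ℝ) / n) * (expu (((s * sig x : ℕ) : ℝ) / r) * w ^ hwt x)) := by
      intro x; ring
    rw [Finset.sum_congr rfl (fun x _ => h1 x), ← Finset.mul_sum,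
      inner_sum_T n r hn hr m s w]
    ring
  rw [Finset.sum_congr rfl (fun m _ => Finset.sum_congr rfl (fun s _ => hms m s))]
  -- Step 4: regroup the m-sum over divisors
  rw [sum_range_divisors n hn (fun m => ∑ s ∈ range r,
    expu (-(((m * a₁ : ℕ) : ℝ) / n)) * (expu (-(((s * a₂ : ℕ) : ℝ) / r)) *
      ((1 - w ^ (n / Nat.gcd m n) + (r : ℂ) * w ^ (n / Nat.gcd m n) *
        (if (r / Nat.gcd s r) ∣ (n / Nat.gcd m n) then 1 else 0)) ^ (n / (n / Nat.gcd m n)))))]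
  refine Finset.sum_congr rfl fun d hd => ?_
  rw [Nat.mem_divisors] at hd
  obtain ⟨hdn, -⟩ := hd
  have hdpos : 0 < d := Nat.pos_of_dvd_of_pos hdn hn
  -- Step 5: simplify the fiber for m = (n/d)*j
  have hfiber : ∀ j ∈ (range d).filter (fun j => Nat.gcd j d = 1),
      (∑ s ∈ range r,
        expu (-((((n / d * j) * a₁ : ℕ) : ℝ) / n)) * (expu (-(((s * a₂ : ℕ) : ℝ) / r)) *
          ((1 - w ^ (n / Nat.gcd (n / d * j) n) + (r : ℂ) * w ^ (n / Nat.gcd (n / d * j) n) *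
            (if (r / Nat.gcd s r) ∣ (n / Nat.gcd (n / d * j) n) then 1 else 0))
              ^ (n / (n / Nat.gcd (n / d * j) n)))))
        = expu (-(((j * a₁ : ℕ) : ℝ) / d)) *
            ∑ s ∈ range r, expu (-(((s * a₂ : ℕ) : ℝ) / r)) * G d (r / Nat.gcd s r) := by
    intro j hj
    rw [Finset.mem_filter, Finset.mem_range] at hj
    obtain ⟨-, hcop⟩ := hj
    have hg : Nat.gcd (n / d * j) n = n / d := gcd_helper n d j hdn hn hcop
    have hDd : n / Nat.gcd (n / d * j) n = d := by rw [hg, Nat.div_div_self hdn hn.ne']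
    have hexp1 : expu (-((((n / d * j) * a₁ : ℕ) : ℝ) / n)) = expu (-(((j * a₁ : ℕ) : ℝ) / d)) := by
      rw [real_arg n d j a₁ hdn hn]
    rw [Finset.mul_sum]
    refine Finset.sum_congr rfl fun s _ => ?_
    rw [hDd, hexp1, hGdef]
  rw [Finset.sum_congr rfl hfiber, ← Finset.sum_mul]
  rw [ram_eq d a₁ hdpos]
  -- Step 6: regroup the s-sum over divisors
  rw [sum_range_divisors r hr (fun s =>
    expu (-(((s * a₂ : ℕ) : ℝ) / r)) * G d (r / Nat.gcd s r))]
  rw [Finset.mul_sum]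
  refine Finset.sum_congr rfl fun e he => ?_
  rw [Nat.mem_divisors] at he
  obtain ⟨her, -⟩ := he
  have hepos : 0 < e := Nat.pos_of_dvd_of_pos her hr
  have hfiber2 : ∀ j ∈ (range e).filter (fun j => Nat.gcd j e = 1),
      expu (-((((r / e * j) * a₂ : ℕ) : ℝ) / r)) * G d (r / Nat.gcd (r / e * j) r)
        = expu (-(((j * a₂ : ℕ) : ℝ) / e)) * G d e := by
    intro j hj
    rw [Finset.mem_filter, Finset.mem_range] at hj
    obtain ⟨-, hcop⟩ := hj
    have hg : Nat.gcd (r / e * j) r = r / e := gcd_helper r e j her hr hcop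
    have hEe : r / Nat.gcd (r / e * j) r = e := by rw [hg, Nat.div_div_self her hr.ne']
    rw [hEe, real_arg r e j a₂ her hr]
  rw [Finset.sum_congr rfl hfiber2, ← Finset.sum_mul, ram_eq e a₂ hepos]
  ring
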